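/- arXiv:1904.10103 — 5 statements merged into one kernel-verified Lean document; each statement's English description precedes it below -/
import Mathlib

section
/- Let a, d ∈ ℝ and b = (b₁,b₂,b₃), c = (c₁,c₂,c₃) ∈ ℝ³. For each i ∈ {1,2,3}, writing {i,j,k} = {1,2,3}, define the symmetric 2×2 real matrix Sᵢ(v) with diagonal entries bⱼbₖ − a·cᵢ and cⱼcₖ − d·bᵢ, and both off-diagonal entries equal to a·d − bᵢcᵢ − (3·a·d − (b₁c₁ + b₂c₂ + b₃c₃))/2. Assume S₁(v), S₂(v), S₃(v) are all positive definite. Set b' = (b₁+b₂+b₃)/3 and c' = (c₁+c₂+c₃)/3. Then the symmetric 2×2 real matrix with diagonal entries b'² − a·c' and c'² − d·b', and both off-diagonal entries equal to (a·d − b'·c')/2, is positive definite. -/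
open Matrix

lemma posdef2_p {α β γ : ℝ} (h : (!![α,β;β,γ]).PosDef) :
    0 < α ∧ 0 < γ ∧ β ^ 2 < α * γ := by
  have h1 := h.dotProduct_mulVec_pos (x := ![1,0]) (by
    intro hc; have := congrFun hc 0; simp at this)
  have h2 := h.dotProduct_mulVec_pos (x := ![0,1]) (by
    intro hc; have := congrFun hc 1; simp at this)
  simp [dotProduct, mulVec, Fin.sum_univ_two] at h1 h2
  have hα : 0 < α := by simpa using h1
  have hγ : 0 < γ := by simpa using h2
  refine ⟨hα, hγ, ?_⟩
  have h3 := h.dotProduct_mulVec_pos (x := ![β, -α]) (by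
    intro hc
    have := congrFun hc 1
    simp at this
    exact hα.ne' this)
  simp [dotProduct, mulVec, Fin.sum_univ_two] at h3
  nlinarith [h3, hα]
open Matrix

lemma posdef2_m {α β γ : ℝ} (hα : 0 < α) (hd : β ^ 2 < α * γ) :
    (!![α,β;β,γ]).PosDef := by
  refine posDef_iff_dotProduct_mulVec.mpr ⟨?_, ?_⟩
  · ext i j
    fin_cases i <;> fin_cases j <;> simp [Matrix.conjTranspose, Matrix.transpose]
  · intro x hx
    simp [dotProduct, mulVec, Fin.sum_univ_two]
    by_cases h1 : x 1 = 0
    · have h0 : x 0 ≠ 0 := by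
        intro hc
        exact hx (funext fun i => by fin_cases i <;> simp [hc, h1])
      have hp : 0 < x 0 * x 0 := mul_self_pos.mpr h0
      rw [h1]; nlinarith [mul_pos hα hp]
    · have h1' : 0 < x 1 * x 1 := mul_self_pos.mpr h1
      nlinarith [sq_nonneg (α * x 0 + β * x 1)]

lemma cs6 (x1 x2 x3 x4 x5 x6 y1 y2 y3 y4 y5 y6 : ℝ) :
    (x1*y1+x2*y2+x3*y3+x4*y4+x5*y5+x6*y6)^2 ≤
      (x1^2+x2^2+x3^2+x4^2+x5^2+x6^2)*(y1^2+y2^2+y3^2+y4^2+y5^2+y6^2) := by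
  nlinarith [sq_nonneg (x1*y2-x2*y1), sq_nonneg (x1*y3-x3*y1), sq_nonneg (x1*y4-x4*y1),
    sq_nonneg (x1*y5-x5*y1), sq_nonneg (x1*y6-x6*y1), sq_nonneg (x2*y3-x3*y2),
    sq_nonneg (x2*y4-x4*y2), sq_nonneg (x2*y5-x5*y2), sq_nonneg (x2*y6-x6*y2),
    sq_nonneg (x3*y4-x4*y3), sq_nonneg (x3*y5-x5*y3), sq_nonneg (x3*y6-x6*y3),
    sq_nonneg (x4*y5-x5*y4), sq_nonneg (x4*y6-x6*y4), sq_nonneg (x5*y6-x6*y5)]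

lemma absle (m r : ℝ) (hr : 0 < r) (h : m^2 < r^2) : |m| < r := by
  rcases abs_cases m with ⟨he, _⟩ | ⟨he, _⟩ <;> nlinarith [hr, h]

lemma key (p1 p2 p3 q1 q2 q3 m1 m2 m3 u1 u2 u3 v1 v2 v3 : ℝ)
    (hp1 : 0 < p1) (hp2 : 0 < p2) (hp3 : 0 < p3)
    (hq1 : 0 < q1) (hq2 : 0 < q2) (hq3 : 0 < q3)
    (hd1 : m1^2 < p1*q1) (hd2 : m2^2 < p2*q2) (hd3 : m3^2 < p3*q3) :
    (u1*v1+u2*v2+u3*v3 - 6*(m1+m2+m3))^2 <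
      (6*(p1+p2+p3)+u1^2+u2^2+u3^2) * (6*(q1+q2+q3)+v1^2+v2^2+v3^2) := by
  obtain ⟨s1, hs1, hs1p⟩ : ∃ s, s^2 = p1 ∧ 0 < s := ⟨Real.sqrt p1, Real.sq_sqrt hp1.le, Real.sqrt_pos.mpr hp1⟩
  obtain ⟨s2, hs2, hs2p⟩ : ∃ s, s^2 = p2 ∧ 0 < s := ⟨Real.sqrt p2, Real.sq_sqrt hp2.le, Real.sqrt_pos.mpr hp2⟩
  obtain ⟨s3, hs3, hs3p⟩ : ∃ s, s^2 = p3 ∧ 0 < s := ⟨Real.sqrt p3, Real.sq_sqrt hp3.le, Real.sqrt_pos.mpr hp3⟩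
  obtain ⟨t1, ht1, ht1p⟩ : ∃ s, s^2 = q1 ∧ 0 < s := ⟨Real.sqrt q1, Real.sq_sqrt hq1.le, Real.sqrt_pos.mpr hq1⟩
  obtain ⟨t2, ht2, ht2p⟩ : ∃ s, s^2 = q2 ∧ 0 < s := ⟨Real.sqrt q2, Real.sq_sqrt hq2.le, Real.sqrt_pos.mpr hq2⟩
  obtain ⟨t3, ht3, ht3p⟩ : ∃ s, s^2 = q3 ∧ 0 < s := ⟨Real.sqrt q3, Real.sq_sqrt hq3.le, Real.sqrt_pos.mpr hq3⟩
  obtain ⟨w, hw, hwp⟩ : ∃ w : ℝ, w^2 = 6 ∧ 0 < w := ⟨Real.sqrt 6, Real.sq_sqrt (by norm_num), Real.sqrt_pos.mpr (by norm_num)⟩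
  have hm1 : |m1| < s1 * t1 := absle _ _ (mul_pos hs1p ht1p) (by nlinarith)
  have hm2 : |m2| < s2 * t2 := absle _ _ (mul_pos hs2p ht2p) (by nlinarith)
  have hm3 : |m3| < s3 * t3 := absle _ _ (mul_pos hs3p ht3p) (by nlinarith)
  obtain ⟨B1, hB1⟩ : ∃ B : ℝ, B = |u1| * |v1| + |u2| * |v2| + |u3| * |v3| + 6*(s1*t1 + s2*t2 + s3*t3) := ⟨_, rfl⟩
  have hAB : |u1*v1+u2*v2+u3*v3 - 6*(m1+m2+m3)| < B1 := by
    have e1 : |u1*v1| = |u1| * |v1| := abs_mul _ _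
    have e2 : |u2*v2| = |u2| * |v2| := abs_mul _ _
    have e3 : |u3*v3| = |u3| * |v3| := abs_mul _ _
    have a1 := le_abs_self (u1*v1); have b1 := neg_abs_le (u1*v1)
    have a2 := le_abs_self (u2*v2); have b2 := neg_abs_le (u2*v2)
    have a3 := le_abs_self (u3*v3); have b3 := neg_abs_le (u3*v3)
    have g1 := abs_lt.mp hm1
    have g2 := abs_lt.mp hm2
    have g3 := abs_lt.mp hm3
    have k1 := le_abs_self m1; have l1 := neg_abs_le m1
    have k2 := le_abs_self m2; have l2 := neg_abs_le m2
    have k3 := le_abs_self m3; have l3 := neg_abs_le m3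
    rw [hB1, abs_lt]
    constructor <;> linarith [g1.1, g1.2, g2.1, g2.2, g3.1, g3.2, e1, e2, e3, a1, a2, a3, b1, b2, b3]
  have hcs := cs6 (w*s1) (w*s2) (w*s3) |u1| |u2| |u3| (w*t1) (w*t2) (w*t3) |v1| |v2| |v3|
  have hB1nn : 0 ≤ B1 := by
    have := mul_pos hs1p ht1p
    have := mul_pos hs2p ht2p
    have := mul_pos hs3p ht3p
    have := mul_nonneg (abs_nonneg u1) (abs_nonneg v1)
    have := mul_nonneg (abs_nonneg u2) (abs_nonneg v2)
    have := mul_nonneg (abs_nonneg u3) (abs_nonneg v3)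
    rw [hB1]; linarith
  have hsq : (u1*v1+u2*v2+u3*v3 - 6*(m1+m2+m3))^2 < B1^2 := by
    have h0 := abs_nonneg (u1*v1+u2*v2+u3*v3 - 6*(m1+m2+m3))
    calc (u1*v1+u2*v2+u3*v3 - 6*(m1+m2+m3))^2
        = |u1*v1+u2*v2+u3*v3 - 6*(m1+m2+m3)|^2 := (sq_abs _).symm
      _ < B1^2 := by exact pow_lt_pow_left₀ hAB h0 (by norm_num)
  have hB1sq : B1^2 ≤ (6*(p1+p2+p3)+u1^2+u2^2+u3^2) * (6*(q1+q2+q3)+v1^2+v2^2+v3^2) := by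
    have e : ((w*s1)*(w*t1)+(w*s2)*(w*t2)+(w*s3)*(w*t3)+|u1| * |v1|+|u2| * |v2|+|u3| * |v3|) = B1 := by
      rw [hB1, ← hw]; ring
    calc B1^2 = ((w*s1)*(w*t1)+(w*s2)*(w*t2)+(w*s3)*(w*t3)+|u1| * |v1|+|u2| * |v2|+|u3| * |v3|)^2 := by rw [e]
      _ ≤ ((w*s1)^2+(w*s2)^2+(w*s3)^2+|u1|^2+|u2|^2+|u3|^2) * ((w*t1)^2+(w*t2)^2+(w*t3)^2+|v1|^2+|v2|^2+|v3|^2) := hcs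
      _ = (6*(p1+p2+p3)+u1^2+u2^2+u3^2) * (6*(q1+q2+q3)+v1^2+v2^2+v3^2) := by
          rw [sq_abs, sq_abs, sq_abs, sq_abs, sq_abs, sq_abs]
          rw [mul_pow, mul_pow, mul_pow, mul_pow, mul_pow, mul_pow, hw, hs1, hs2, hs3, ht1, ht2, ht3]
          ring
  linarith

open Matrix

/-- Positivity of a 2×2×2 real box is preserved under the GL₂-equivariant
projection to real binary cubic forms (Lemma 4.4 of the paper). -/
theorem box_positivity_projects (a d b₁ b₂ b₃ c₁ c₂ c₃ : ℝ)
    (h1 : (!![b₂ * b₃ - a * c₁,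
              a * d - b₁ * c₁ - (3 * a * d - (b₁ * c₁ + b₂ * c₂ + b₃ * c₃)) / 2;
              a * d - b₁ * c₁ - (3 * a * d - (b₁ * c₁ + b₂ * c₂ + b₃ * c₃)) / 2,
              c₂ * c₃ - d * b₁]).PosDef)
    (h2 : (!![b₁ * b₃ - a * c₂,
              a * d - b₂ * c₂ - (3 * a * d - (b₁ * c₁ + b₂ * c₂ + b₃ * c₃)) / 2;
              a * d - b₂ * c₂ - (3 * a * d - (b₁ * c₁ + b₂ * c₂ + b₃ * c₃)) / 2,
              c₁ * c₃ - d * b₂]).PosDef)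
    (h3 : (!![b₁ * b₂ - a * c₃,
              a * d - b₃ * c₃ - (3 * a * d - (b₁ * c₁ + b₂ * c₂ + b₃ * c₃)) / 2;
              a * d - b₃ * c₃ - (3 * a * d - (b₁ * c₁ + b₂ * c₂ + b₃ * c₃)) / 2,
              c₁ * c₂ - d * b₃]).PosDef) :
    (!![((b₁ + b₂ + b₃) / 3) ^ 2 - a * ((c₁ + c₂ + c₃) / 3),
        (a * d - ((b₁ + b₂ + b₃) / 3) * ((c₁ + c₂ + c₃) / 3)) / 2;
        (a * d - ((b₁ + b₂ + b₃) / 3) * ((c₁ + c₂ + c₃) / 3)) / 2,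
        ((c₁ + c₂ + c₃) / 3) ^ 2 - d * ((b₁ + b₂ + b₃) / 3)]).PosDef := by
  obtain ⟨hp1, hq1, hm1⟩ := posdef2_p h1
  obtain ⟨hp2, hq2, hm2⟩ := posdef2_p h2
  obtain ⟨hp3, hq3, hm3⟩ := posdef2_p h3
  have K := key _ _ _ _ _ _ _ _ _ (b₁ - b₂) (b₁ - b₃) (b₂ - b₃) (c₁ - c₂) (c₁ - c₃) (c₂ - c₃)
    hp1 hp2 hp3 hq1 hq2 hq3 hm1 hm2 hm3
  have hP : 0 < ((b₁ + b₂ + b₃) / 3) ^ 2 - a * ((c₁ + c₂ + c₃) / 3) := by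
    nlinarith [hp1, hp2, hp3, sq_nonneg (b₁ - b₂), sq_nonneg (b₁ - b₃), sq_nonneg (b₂ - b₃)]
  have hD : ((a * d - ((b₁ + b₂ + b₃) / 3) * ((c₁ + c₂ + c₃) / 3)) / 2) ^ 2 <
      (((b₁ + b₂ + b₃) / 3) ^ 2 - a * ((c₁ + c₂ + c₃) / 3)) *
      (((c₁ + c₂ + c₃) / 3) ^ 2 - d * ((b₁ + b₂ + b₃) / 3)) := by
    linarith [K]
  exact posdef2_m hP hD
end

section
/- Let a, d ∈ ℤ and b = (b₁,b₂,b₃), c = (c₁,c₂,c₃) ∈ ℤ³, and for each i ∈ {1,2,3}, writing {i,j,k} = {1,2,3}, define the symmetric 2×2 real matrix Sᵢ(v) with diagonal entries bⱼbₖ − a·cᵢ and cⱼcₖ − d·bᵢ, and both off-diagonal entries equal to a·d − bᵢcᵢ − (3·a·d − (b₁c₁ + b₂c₂ + b₃c₃))/2. Suppose that S₁(v), S₂(v), S₃(v) are all positive definite, that a = −1, d = 0, b₁+b₂+b₃ = 0, and c₁+c₂+c₃ = 3. Then b = (0,0,0) and c = (1,1,1). -/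
open Matrix


lemma entry11_pos {M : Matrix (Fin 2) (Fin 2) ℝ} (h : M.PosDef) : 0 < M 1 1 := by
  have hx : (Pi.single 1 1 : Fin 2 → ℝ) ≠ 0 := by
    intro hh; have := congrFun hh 1; simp at this
  have := h.dotProduct_mulVec_pos hx
  simpa [mulVec, dotProduct, Fin.sum_univ_two, Pi.single_apply] using this

lemma keyB (b₁ b₂ b₃ : ℤ) (hb : b₁ + b₂ + b₃ = 0) (q1 : b₁ ^ 2 ≤ b₂ * b₃)
    (q2 : b₂ ^ 2 ≤ b₁ * b₃) (q3 : b₃ ^ 2 ≤ b₁ * b₂) : b₁ = 0 ∧ b₂ = 0 ∧ b₃ = 0 := by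
  have hs : b₁ ^ 2 + b₂ ^ 2 + b₃ ^ 2 ≤ 0 := by nlinarith [sq_nonneg (b₁ + b₂ + b₃)]
  refine ⟨?_, ?_, ?_⟩ <;> nlinarith [sq_nonneg b₁, sq_nonneg b₂, sq_nonneg b₃]

lemma keyC (c₁ c₂ c₃ : ℤ) (hc : c₁ + c₂ + c₃ = 3) (p1 : 0 < c₂ * c₃)
    (p2 : 0 < c₁ * c₃) (p3 : 0 < c₁ * c₂) : c₁ = 1 ∧ c₂ = 1 ∧ c₃ = 1 := by
  have hc1 : 0 < c₁ := by
    rcases lt_trichotomy c₁ 0 with h | h | h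
    · have h2' : c₂ < 0 := by nlinarith
      have h3' : c₃ < 0 := by nlinarith
      omega
    · subst h; simp at p3
    · exact h
  have hc2 : 0 < c₂ := by nlinarith
  have hc3 : 0 < c₃ := by nlinarith
  omega

/-- The only positive integral 2×2×2 box lying above the binary cubic form
`x³ - xy²` is `(-1, (0,0,0), (1,1,1), 0)` (from the proof of Corollary 4.6). -/
theorem unique_box_above_cubic (a d b₁ b₂ b₃ c₁ c₂ c₃ : ℤ)
    (h1 : (!![(b₂ * b₃ - a * c₁ : ℝ),
              (a * d - b₁ * c₁ : ℝ) - (3 * (a * d : ℝ) - ((b₁ * c₁ + b₂ * c₂ + b₃ * c₃ : ℤ) : ℝ)) / 2;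
              (a * d - b₁ * c₁ : ℝ) - (3 * (a * d : ℝ) - ((b₁ * c₁ + b₂ * c₂ + b₃ * c₃ : ℤ) : ℝ)) / 2,
              (c₂ * c₃ - d * b₁ : ℝ)]).PosDef)
    (h2 : (!![(b₁ * b₃ - a * c₂ : ℝ),
              (a * d - b₂ * c₂ : ℝ) - (3 * (a * d : ℝ) - ((b₁ * c₁ + b₂ * c₂ + b₃ * c₃ : ℤ) : ℝ)) / 2;
              (a * d - b₂ * c₂ : ℝ) - (3 * (a * d : ℝ) - ((b₁ * c₁ + b₂ * c₂ + b₃ * c₃ : ℤ) : ℝ)) / 2,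
              (c₁ * c₃ - d * b₂ : ℝ)]).PosDef)
    (h3 : (!![(b₁ * b₂ - a * c₃ : ℝ),
              (a * d - b₃ * c₃ : ℝ) - (3 * (a * d : ℝ) - ((b₁ * c₁ + b₂ * c₂ + b₃ * c₃ : ℤ) : ℝ)) / 2;
              (a * d - b₃ * c₃ : ℝ) - (3 * (a * d : ℝ) - ((b₁ * c₁ + b₂ * c₂ + b₃ * c₃ : ℤ) : ℝ)) / 2,
              (c₁ * c₂ - d * b₃ : ℝ)]).PosDef)
    (ha : a = -1) (hd : d = 0) (hb : b₁ + b₂ + b₃ = 0) (hc : c₁ + c₂ + c₃ = 3) :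
    b₁ = 0 ∧ b₂ = 0 ∧ b₃ = 0 ∧ c₁ = 1 ∧ c₂ = 1 ∧ c₃ = 1 := by
  subst ha hd
  have p1 : (0:ℤ) < c₂ * c₃ := by
    have h := entry11_pos h1
    simp only [Matrix.cons_val', Matrix.cons_val_one, Matrix.head_cons, Matrix.head_fin_const,
      Matrix.empty_val', Matrix.cons_val_fin_one, Matrix.of_apply] at h
    norm_num at h
    exact_mod_cast h
  have p2 : (0:ℤ) < c₁ * c₃ := by
    have h := entry11_pos h2
    simp only [Matrix.cons_val', Matrix.cons_val_one, Matrix.head_cons, Matrix.head_fin_const,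
      Matrix.empty_val', Matrix.cons_val_fin_one, Matrix.of_apply] at h
    norm_num at h
    exact_mod_cast h
  have p3 : (0:ℤ) < c₁ * c₂ := by
    have h := entry11_pos h3
    simp only [Matrix.cons_val', Matrix.cons_val_one, Matrix.head_cons, Matrix.head_fin_const,
      Matrix.empty_val', Matrix.cons_val_fin_one, Matrix.of_apply] at h
    norm_num at h
    exact_mod_cast h
  obtain ⟨rfl, rfl, rfl⟩ := keyC c₁ c₂ c₃ hc p1 p2 p3
  have hbR : (b₁:ℝ) + b₂ + b₃ = 0 := by exact_mod_cast congrArg (Int.cast : ℤ → ℝ) hb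
  have hb3 : (b₃:ℝ) = -(b₁:ℝ) - b₂ := by linarith
  have d1 := h1.det_pos
  have d2 := h2.det_pos
  have d3 := h3.det_pos
  rw [Matrix.det_fin_two_of] at d1 d2 d3
  push_cast at d1 d2 d3
  rw [hb3] at d1 d2 d3
  ring_nf at d1 d2 d3
  have q1 : (b₁:ℤ) ^ 2 ≤ b₂ * b₃ := by
    have hr : ((b₁:ℝ)) ^ 2 < (b₂:ℝ) * b₃ + 1 := by rw [hb3]; nlinarith [d1]
    have : (b₁:ℤ) ^ 2 < b₂ * b₃ + 1 := by exact_mod_cast hr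
    omega
  have q2 : (b₂:ℤ) ^ 2 ≤ b₁ * b₃ := by
    have hr : ((b₂:ℝ)) ^ 2 < (b₁:ℝ) * b₃ + 1 := by rw [hb3]; nlinarith [d2]
    have : (b₂:ℤ) ^ 2 < b₁ * b₃ + 1 := by exact_mod_cast hr
    omega
  have q3 : (b₃:ℤ) ^ 2 ≤ b₁ * b₂ := by
    have hr : ((b₃:ℝ)) ^ 2 < (b₁:ℝ) * b₂ + 1 := by rw [hb3]; nlinarith [d3]
    have : (b₃:ℤ) ^ 2 < b₁ * b₂ + 1 := by exact_mod_cast hr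
    omega
  obtain ⟨hb1, hb2, hb3'⟩ := keyB b₁ b₂ b₃ hb q1 q2 q3
  exact ⟨hb1, hb2, hb3', rfl, rfl, rfl⟩
end

section
/- Let n ≥ 1 and let V = ℝ⁴ × ℝⁿ with quadratic form q(u,v) = |u|² − |v|² (standard Euclidean norms), associated bilinear form (x,y) := q(x+y) − q(x) − q(y), and involution ι(u,v) = (u,−v). For y₁, y₂ ∈ V, with positive parts u₁, u₂ ∈ ℝ⁴, set S(y₁,y₂) = (1/2)·[[(y₁,y₁),(y₁,y₂)],[(y₁,y₂),(y₂,y₂)]] and R(y₁,y₂) = (1/2)·[[(y₁,ιy₁),(y₁,ιy₂)],[(y₁,ιy₂),(y₂,ιy₂)]]. Then det(S(y₁,y₂) + R(y₁,y₂)) = 4·(|u₁|²·|u₂|² − ⟨u₁,u₂⟩²); in particular det(S+R) ≥ 0, and if S(y₁,y₂) is positive definite then u₁ and u₂ are linearly independent and det(S+R) > 0. -/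
open Matrix

/-- The quadratic form of signature (4,n) on ℝ⁴ × ℝⁿ. -/
def qsig (n : ℕ) (y : (Fin 4 → ℝ) × (Fin n → ℝ)) : ℝ :=
  (∑ a, y.1 a * y.1 a) - ∑ a, y.2 a * y.2 a

/-- The associated bilinear form `(x, y) = q(x+y) - q(x) - q(y)`. -/
def bsig (n : ℕ) (x y : (Fin 4 → ℝ) × (Fin n → ℝ)) : ℝ :=
  qsig n (x + y) - qsig n x - qsig n y

/-- The involution `ι(u, v) = (u, -v)`. -/
def iotasig (n : ℕ) (y : (Fin 4 → ℝ) × (Fin n → ℝ)) : (Fin 4 → ℝ) × (Fin n → ℝ) :=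
  (y.1, -y.2)

/-- `S(y₁,y₂)`, the Gram-type matrix of the indefinite form. -/
noncomputable def Ssig (n : ℕ) (y₁ y₂ : (Fin 4 → ℝ) × (Fin n → ℝ)) : Matrix (Fin 2) (Fin 2) ℝ :=
  (1 / 2 : ℝ) • !![bsig n y₁ y₁, bsig n y₁ y₂; bsig n y₁ y₂, bsig n y₂ y₂]

/-- `R(y₁,y₂)`, the Gram-type matrix of the positive-definite majorant. -/
noncomputable def Rsig (n : ℕ) (y₁ y₂ : (Fin 4 → ℝ) × (Fin n → ℝ)) : Matrix (Fin 2) (Fin 2) ℝ :=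
  (1 / 2 : ℝ) • !![bsig n y₁ (iotasig n y₁), bsig n y₁ (iotasig n y₂);
                   bsig n y₁ (iotasig n y₂), bsig n y₂ (iotasig n y₂)]

lemma sum_polar {m : ℕ} (f g : Fin m → ℝ) :
    ((∑ a, (f a + g a) * (f a + g a)) - ∑ a, f a * f a) - ∑ a, g a * g a
      = 2 * ∑ a, f a * g a := by
  rw [Finset.mul_sum, ← Finset.sum_sub_distrib, ← Finset.sum_sub_distrib]
  exact Finset.sum_congr rfl fun a _ => by ring

lemma bsig_eq (n : ℕ) (x y : (Fin 4 → ℝ) × (Fin n → ℝ)) :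
    bsig n x y = 2 * (∑ a, x.1 a * y.1 a) - 2 * (∑ a, x.2 a * y.2 a) := by
  simp only [bsig, qsig, Prod.fst_add, Prod.snd_add, Pi.add_apply]
  rw [show ∀ A B C D E F : ℝ, A - B - (C - D) - (E - F) = (A - C - E) - (B - D - F) by intros; ring]
  rw [sum_polar, sum_polar]

lemma SR_det (n : ℕ) (y₁ y₂ : (Fin 4 → ℝ) × (Fin n → ℝ)) :
    (Ssig n y₁ y₂ + Rsig n y₁ y₂).det =
      4 * ((∑ a, y₁.1 a * y₁.1 a) * (∑ a, y₂.1 a * y₂.1 a) - (∑ a, y₁.1 a * y₂.1 a) ^ 2) := by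
  simp [Ssig, Rsig, Matrix.det_fin_two, bsig_eq, iotasig]
  ring

lemma quad_sum {m : ℕ} (f g : Fin m → ℝ) (s t : ℝ) :
    ∑ a, (s * f a + t * g a) ^ 2
      = s * s * (∑ a, f a * f a) + 2 * (s * t) * (∑ a, f a * g a)
        + t * t * ∑ a, g a * g a := by
  rw [Finset.mul_sum, Finset.mul_sum, Finset.mul_sum, ← Finset.sum_add_distrib,
    ← Finset.sum_add_distrib]
  exact Finset.sum_congr rfl fun a _ => by ring

/-- Lemma 3.6 of the paper: `det(S + R)` equals four times the Gram determinant of the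
positive parts; in particular it is nonnegative, and positive when `S` is positive definite. -/
theorem det_S_add_R (n : ℕ) (hn : 1 ≤ n) (y₁ y₂ : (Fin 4 → ℝ) × (Fin n → ℝ)) :
    (Ssig n y₁ y₂ + Rsig n y₁ y₂).det =
      4 * ((∑ a, y₁.1 a * y₁.1 a) * (∑ a, y₂.1 a * y₂.1 a) - (∑ a, y₁.1 a * y₂.1 a) ^ 2) ∧
    0 ≤ (Ssig n y₁ y₂ + Rsig n y₁ y₂).det ∧
    ((Ssig n y₁ y₂).PosDef →
      LinearIndependent ℝ ![y₁.1, y₂.1] ∧ 0 < (Ssig n y₁ y₂ + Rsig n y₁ y₂).det) := by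
  have hdet := SR_det n y₁ y₂
  set A := ∑ a, y₁.1 a * y₁.1 a with hA
  set B := ∑ a, y₁.1 a * y₂.1 a with hB
  set C := ∑ a, y₂.1 a * y₂.1 a with hC
  have key : B ^ 2 ≤ A * C := by
    have := Finset.sum_mul_sq_le_sq_mul_sq Finset.univ y₁.1 y₂.1
    simpa [hA, hB, hC, sq] using this
  refine ⟨hdet, by rw [hdet]; nlinarith, ?_⟩
  intro hpos
  -- from positive definiteness: no nontrivial relation among positive parts
  have hli : ∀ s t : ℝ, s • y₁.1 + t • y₂.1 = 0 → s = 0 ∧ t = 0 := by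
    intro s t h
    by_contra hc
    have hv : ![s, t] ≠ 0 := by
      intro h0
      exact hc ⟨congrFun h0 0, congrFun h0 1⟩
    have hpt : ∀ a, s * y₁.1 a + t * y₂.1 a = 0 := fun a => congrFun h a
    have hposval := hpos.dotProduct_mulVec_pos hv
    have hexp : star ![s, t] ⬝ᵥ (Ssig n y₁ y₂ *ᵥ ![s, t])
        = (∑ a, (s * y₁.1 a + t * y₂.1 a) ^ 2) - ∑ a, (s * y₁.2 a + t * y₂.2 a) ^ 2 := by
      rw [quad_sum, quad_sum]
      simp [Ssig, Matrix.mulVec, dotProduct, Fin.sum_univ_two, bsig_eq]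
      ring
    rw [hexp] at hposval
    have h1 : (∑ a, (s * y₁.1 a + t * y₂.1 a) ^ 2) = 0 := by
      simp [hpt]
    have h2 : 0 ≤ ∑ a, (s * y₁.2 a + t * y₂.2 a) ^ 2 :=
      Finset.sum_nonneg fun a _ => sq_nonneg _
    linarith
  have hLI : LinearIndependent ℝ ![y₁.1, y₂.1] := LinearIndependent.pair_iff.mpr hli
  refine ⟨hLI, ?_⟩
  rw [hdet]
  rcases lt_or_eq_of_le key with hlt | heq
  · nlinarith
  · exfalso
    -- equality in Cauchy–Schwarz forces a linear relation
    have hC0 : 0 < C := by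
      rcases lt_or_eq_of_le (Finset.sum_nonneg (fun a _ => mul_self_nonneg (y₂.1 a)) :
          (0:ℝ) ≤ C) with h | h
      · exact h
      · exfalso
        have hz : ∀ a, y₂.1 a = 0 := by
          intro a
          have := (Finset.sum_eq_zero_iff_of_nonneg
            (fun a _ => mul_self_nonneg (y₂.1 a))).mp h.symm a (Finset.mem_univ a)
          exact mul_self_eq_zero.mp this
        have : (0:ℝ) • y₁.1 + (1:ℝ) • y₂.1 = 0 := by
          funext a; simp [hz a]
        exact one_ne_zero (hli 0 1 this).2
    have hzero : ∑ a, (C * y₁.1 a + (-B) * y₂.1 a) ^ 2 = 0 := by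
      rw [quad_sum, ← hA, ← hB, ← hC]
      nlinarith
    have hrel : ∀ a, C * y₁.1 a + (-B) * y₂.1 a = 0 := by
      intro a
      have := (Finset.sum_eq_zero_iff_of_nonneg
        (fun a _ => sq_nonneg (C * y₁.1 a + (-B) * y₂.1 a))).mp hzero a (Finset.mem_univ a)
      exact sq_eq_zero_iff.mp this
    have : C • y₁.1 + (-B) • y₂.1 = 0 := by
      funext a; simpa using hrel a
    exact (ne_of_gt hC0) ((hli C (-B) this).1 ▸ rfl)
end

section
/- Let m ≥ 8 be an integer, let T be a positive definite symmetric real 2×2 matrix, and let w be an integer with w > m(m−1)/2. For y₁, y₂ ∈ ℝ^m let R(y₁,y₂) denote the 2×2 Gram matrix [[⟨y₁,y₁⟩, ⟨y₁,y₂⟩],[⟨y₁,y₂⟩, ⟨y₂,y₂⟩]] with respect to the standard inner product. Then the sum over all pairs (y₁, y₂) ∈ ℤ^m × ℤ^m of det(R(y₁,y₂))^{w/2} / det(T + R(y₁,y₂))^{w + 1/2} converges (is finite). -/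
open Matrix

/-- The Gram matrix of `y₁, y₂ ∈ ℝ^m` for the standard inner product. -/
def gram (m : ℕ) (y₁ y₂ : Fin m → ℤ) : Matrix (Fin 2) (Fin 2) ℝ :=
  !![∑ a, (y₁ a : ℝ) * (y₁ a : ℝ), ∑ a, (y₁ a : ℝ) * (y₂ a : ℝ);
     ∑ a, (y₁ a : ℝ) * (y₂ a : ℝ), ∑ a, (y₂ a : ℝ) * (y₂ a : ℝ)]

lemma aux_summable_int {t : ℝ} (ht : 1/2 < t) :
    Summable fun k : ℤ => ((1 : ℝ) + (k : ℝ) ^ 2) ^ (-t) := by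
  have h1 : Summable fun k : ℤ => |(k : ℝ)| ^ (-(2 * t)) :=
    Real.summable_abs_int_rpow (by linarith)
  have h2 : Summable fun k : ℤ => (if k = 0 then (1 : ℝ) else 0) := by
    apply summable_of_ne_finset_zero (s := {0})
    intro k hk
    simp only [Finset.mem_singleton] at hk
    simp [hk]
  refine Summable.of_nonneg_of_le (fun k => Real.rpow_nonneg (by positivity) _)
    (fun k => ?_) (h1.add h2)
  rcases eq_or_ne k 0 with rfl | hk
  · simp only [Int.cast_zero, ne_eq, abs_zero, if_pos rfl]
    rw [Real.zero_rpow (show -(2*t) ≠ 0 by intro h; nlinarith)]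
    norm_num
  · have hk2 : (0:ℝ) < (k:ℝ)^2 := by
      have : (k:ℝ) ≠ 0 := Int.cast_ne_zero.mpr hk
      positivity
    have e1 : |(k:ℝ)| ^ (-(2 * t)) = ((k:ℝ)^2) ^ (-t) := by
      rw [show ((k:ℝ)^2) = |(k:ℝ)|^(2:ℕ) by rw [sq_abs], ← Real.rpow_natCast |(k:ℝ)| 2,
        ← Real.rpow_mul (abs_nonneg _)]
      norm_num
    have : ((1:ℝ) + (k:ℝ)^2) ^ (-t) ≤ ((k:ℝ)^2) ^ (-t) :=
      Real.rpow_le_rpow_of_nonpos hk2 (by linarith) (by linarith)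
    simp only [if_neg hk, add_zero]
    rw [e1]
    linarith

lemma aux_summable_pi {t : ℝ} (ht : 1/2 < t) (n : ℕ) :
    Summable fun y : Fin n → ℤ => ∏ a, ((1 : ℝ) + (y a : ℝ) ^ 2) ^ (-t) := by
  induction n with
  | zero => simpa using summable_of_finite_support (Set.toFinite _)
  | succ n ih =>
    rw [← (Fin.consEquiv (fun _ : Fin (n+1) => ℤ)).summable_iff]
    have hg : ∀ k : ℤ, 0 ≤ ((1 : ℝ) + (k : ℝ) ^ 2) ^ (-t) :=
      fun k => Real.rpow_nonneg (by positivity) _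
    refine (((aux_summable_int ht).mul_of_nonneg ih (fun k => hg k)
      (fun y => Finset.prod_nonneg fun a _ => hg _)).congr fun p => ?_)
    simp only [Fin.consEquiv, Equiv.coe_fn_mk, Function.comp]
    rw [Fin.prod_univ_succ]
    simp

lemma aux_rpow_bound {d D c Q u e : ℝ} (hd : 0 ≤ d) (hc : 0 < c) (hQ : 0 < Q)
    (hD : d + c * Q ≤ D) (hu : 0 ≤ u) (he : 0 < e) :
    d ^ u / D ^ (u + e) ≤ c ^ (-e) * Q ^ (-e) := by
  have hcQ : 0 < c * Q := mul_pos hc hQ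
  have hDpos : 0 < D := lt_of_lt_of_le (by linarith) hD
  have h1 : d ^ u ≤ D ^ u := Real.rpow_le_rpow hd (by linarith) hu
  calc d ^ u / D ^ (u + e) = d ^ u / (D ^ u * D ^ e) := by rw [Real.rpow_add hDpos]
    _ ≤ D ^ u / (D ^ u * D ^ e) := by
        have hX : 0 < D ^ u * D ^ e :=
          mul_pos (Real.rpow_pos_of_pos hDpos u) (Real.rpow_pos_of_pos hDpos e)
        exact (div_le_div_iff_of_pos_right hX).mpr h1
    _ = 1 / D ^ e := by
        rw [div_mul_eq_div_div, div_self (ne_of_gt (Real.rpow_pos_of_pos hDpos u))]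
    _ ≤ 1 / (c * Q) ^ e := by
        apply one_div_le_one_div_of_le (Real.rpow_pos_of_pos hcQ e)
        exact Real.rpow_le_rpow hcQ.le (by linarith) he.le
    _ = c ^ (-e) * Q ^ (-e) := by
        rw [Real.mul_rpow hc.le hQ.le, Real.rpow_neg hc.le, Real.rpow_neg hQ.le, one_div, mul_inv]

lemma aux_prod_rpow_bound {n : ℕ} {t Q : ℝ} (ht : 0 ≤ t) {f : Fin n → ℝ}
    (hf : ∀ a, 0 ≤ f a) (hQ : 1 ≤ Q) (hfQ : ∀ a, 1 + f a ≤ Q) :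
    Q ^ (-((n : ℝ) * t)) ≤ ∏ a, (1 + f a) ^ (-t) := by
  have hQ0 : (0:ℝ) < Q := by linarith
  have hfa : ∀ a, (0:ℝ) < 1 + f a := fun a => by have := hf a; linarith
  have hP : (0:ℝ) < ∏ a, (1 + f a) := Finset.prod_pos fun a _ => hfa a
  have hPle : (∏ a, (1 + f a)) ≤ Q ^ n := by
    calc (∏ a, (1 + f a)) ≤ ∏ _a : Fin n, Q :=
          Finset.prod_le_prod (fun a _ => (hfa a).le) (fun a _ => hfQ a)
      _ = Q ^ n := by rw [Finset.prod_const, Finset.card_univ, Fintype.card_fin]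
  have h1 : (∏ a, (1 + f a)) ^ t ≤ Q ^ ((n : ℝ) * t) := by
    calc (∏ a, (1 + f a)) ^ t ≤ (Q ^ n) ^ t := Real.rpow_le_rpow hP.le hPle ht
      _ = Q ^ ((n : ℝ) * t) := by
          rw [← Real.rpow_natCast Q n, ← Real.rpow_mul hQ0.le]
  rw [show (∏ a, (1 + f a) ^ (-t)) = (∏ a, (1 + f a)) ^ (-t) from
      Real.finset_prod_rpow _ _ (fun a _ => (hfa a).le) _,
    Real.rpow_neg hQ0.le, Real.rpow_neg hP.le]
  exact inv_anti₀ (Real.rpow_pos_of_pos hP t) h1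


lemma aux_det_lb {a b g n1 n2 s c : ℝ} (ha : 0 < a) (hg : 0 < g)
    (hc1 : c ≤ a * g - b ^ 2) (hc2 : c ≤ (a * g - b ^ 2) / (a + g))
    (hn1 : 0 ≤ n1) (hn2 : 0 ≤ n2) (hs : s ^ 2 ≤ n1 * n2) :
    (n1 * n2 - s ^ 2) + c * (1 + n1 + n2) ≤ (a + n1) * (g + n2) - (b + s) ^ 2 := by
  have hlam : (a * g - b ^ 2) * (n1 + n2) ≤ (a * n2 + g * n1 - 2 * b * s) * (a + g) := by
    have hP : 0 ≤ (g ^ 2 + b ^ 2) * n1 + (a ^ 2 + b ^ 2) * n2 := by positivity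
    have hPq : (2 * (a + g) * b * s) ^ 2 ≤
        ((g ^ 2 + b ^ 2) * n1 + (a ^ 2 + b ^ 2) * n2) ^ 2 := by
      nlinarith [sq_nonneg ((g ^ 2 + b ^ 2) * n1 - (a ^ 2 + b ^ 2) * n2),
        mul_nonneg (mul_nonneg (sq_nonneg (a * g - b ^ 2)) hn1) hn2,
        mul_nonneg (sq_nonneg ((a + g) * b)) (sub_nonneg.mpr hs)]
    have hkey : 2 * (a + g) * b * s ≤ (g ^ 2 + b ^ 2) * n1 + (a ^ 2 + b ^ 2) * n2 := by
      nlinarith [hP, hPq]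
    nlinarith [hkey]
  have hclam : c * (n1 + n2) ≤ a * n2 + g * n1 - 2 * b * s := by
    have h1 : c * (n1 + n2) ≤ ((a * g - b ^ 2) / (a + g)) * (n1 + n2) :=
      mul_le_mul_of_nonneg_right hc2 (by linarith)
    have h2 : ((a * g - b ^ 2) / (a + g)) * (n1 + n2) ≤ a * n2 + g * n1 - 2 * b * s := by
      rw [div_mul_eq_mul_div, div_le_iff₀ (by linarith)]
      exact hlam
    linarith
  nlinarith [hclam, hc1]

/-- The finiteness estimate of Lemma 3.7 of the paper: for `T` positive definite and
`w > m(m-1)/2`, the sum over integer pairs of `det(R)^{w/2} / det(T+R)^{w+1/2}` converges. -/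
theorem finiteness_lemma (m : ℕ) (hm : 8 ≤ m)
    (T : Matrix (Fin 2) (Fin 2) ℝ) (hT : T.IsSymm) (hTpos : T.PosDef)
    (w : ℤ) (hw : (m * (m - 1) : ℝ) / 2 < (w : ℝ)) :
    Summable (fun p : (Fin m → ℤ) × (Fin m → ℤ) =>
      (gram m p.1 p.2).det ^ ((w : ℝ) / 2) /
        (T + gram m p.1 p.2).det ^ ((w : ℝ) + 1 / 2)) := by
  -- entries of T
  have h10 : T 1 0 = T 0 1 := by
    conv_lhs => rw [← hT]
    rfl
  have hα : 0 < T 0 0 := by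
    have := hTpos.dotProduct_mulVec_pos (x := (![1,0] : Fin 2 → ℝ)) (by intro h; simpa using congrFun h 0)
    simpa [dotProduct, mulVec, Fin.sum_univ_two] using this
  have hγ : 0 < T 1 1 := by
    have := hTpos.dotProduct_mulVec_pos (x := (![0,1] : Fin 2 → ℝ)) (by intro h; simpa using congrFun h 1)
    simpa [dotProduct, mulVec, Fin.sum_univ_two] using this
  have hdet : 0 < T 0 0 * T 1 1 - T 0 1 ^ 2 := by
    have h3 := hTpos.det_pos
    rw [Matrix.det_fin_two, h10] at h3
    nlinarith
  -- numerical setup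
  have hm1 : (8:ℝ) ≤ (m:ℝ) := by exact_mod_cast hm
  have hmpos : (0:ℝ) < (m:ℝ) := by linarith
  have hwm : 2 * (m:ℝ) + 1 < (w:ℝ) := by nlinarith
  set e : ℝ := ((w:ℝ) + 1) / 2 with he_def
  have he : 0 < e := by rw [he_def]; linarith
  have hem : (m:ℝ) + 1 ≤ e := by rw [he_def]; linarith
  set t : ℝ := e / (2 * (m:ℝ)) with ht_def
  have ht2 : e = 2 * (m:ℝ) * t := by
    rw [ht_def]; field_simp
  have ht : 1/2 < t := by
    rw [ht_def, lt_div_iff₀ (by linarith)]; linarith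
  have ht0 : 0 ≤ t := by linarith
  -- constant
  set c : ℝ := min (T 0 0 * T 1 1 - T 0 1 ^ 2)
      ((T 0 0 * T 1 1 - T 0 1 ^ 2) / (T 0 0 + T 1 1)) with hc_def
  have hcpos : 0 < c := lt_min hdet (div_pos hdet (by linarith))
  -- the majorant
  have hGnn : ∀ k : ℤ, 0 ≤ ((1 : ℝ) + (k : ℝ) ^ 2) ^ (-t) :=
    fun k => Real.rpow_nonneg (by positivity) _
  have hFnn : ∀ y : Fin m → ℤ, 0 ≤ ∏ a, ((1 : ℝ) + (y a : ℝ) ^ 2) ^ (-t) :=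
    fun y => Finset.prod_nonneg fun a _ => hGnn _
  have hFsum := aux_summable_pi ht m
  have hmaj : Summable (fun p : (Fin m → ℤ) × (Fin m → ℤ) =>
      c ^ (-e) * ((∏ a, ((1 : ℝ) + (p.1 a : ℝ) ^ 2) ^ (-t)) *
        ∏ a, ((1 : ℝ) + (p.2 a : ℝ) ^ 2) ^ (-t))) :=
    (hFsum.mul_of_nonneg hFsum hFnn hFnn).mul_left _
  -- pointwise estimate
  have hexp : (w : ℝ) + 1 / 2 = (w : ℝ) / 2 + e := by rw [he_def]; ring
  have hcdet : c ≤ T 0 0 * T 1 1 - T 0 1 ^ 2 := min_le_left _ _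
  have hclamc : c ≤ (T 0 0 * T 1 1 - T 0 1 ^ 2) / (T 0 0 + T 1 1) := min_le_right _ _
  clear_value e t c
  clear he_def ht_def hc_def
  have key : ∀ p : (Fin m → ℤ) × (Fin m → ℤ),
      0 ≤ (gram m p.1 p.2).det ^ ((w : ℝ) / 2) /
          (T + gram m p.1 p.2).det ^ ((w : ℝ) + 1 / 2) ∧
      (gram m p.1 p.2).det ^ ((w : ℝ) / 2) /
          (T + gram m p.1 p.2).det ^ ((w : ℝ) + 1 / 2) ≤
        c ^ (-e) * ((∏ a, ((1 : ℝ) + (p.1 a : ℝ) ^ 2) ^ (-t)) *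
          ∏ a, ((1 : ℝ) + (p.2 a : ℝ) ^ 2) ^ (-t)) := by
    rintro ⟨y₁, y₂⟩
    have hdval : (gram m y₁ y₂).det =
        (∑ a, (y₁ a : ℝ) * (y₁ a : ℝ)) * (∑ a, (y₂ a : ℝ) * (y₂ a : ℝ))
          - (∑ a, (y₁ a : ℝ) * (y₂ a : ℝ)) ^ 2 := by
      simp [_root_.gram, Matrix.det_fin_two]; ring
    have hDval : (T + gram m y₁ y₂).det =
        (T 0 0 + ∑ a, (y₁ a : ℝ) * (y₁ a : ℝ)) * (T 1 1 + ∑ a, (y₂ a : ℝ) * (y₂ a : ℝ))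
          - (T 0 1 + ∑ a, (y₁ a : ℝ) * (y₂ a : ℝ)) ^ 2 := by
      simp [_root_.gram, Matrix.det_fin_two, Matrix.add_apply, h10]; ring
    set n1 : ℝ := ∑ a, (y₁ a : ℝ) * (y₁ a : ℝ) with hn1_def
    set n2 : ℝ := ∑ a, (y₂ a : ℝ) * (y₂ a : ℝ) with hn2_def
    set s : ℝ := ∑ a, (y₁ a : ℝ) * (y₂ a : ℝ) with hs_def
    have hn1 : 0 ≤ n1 := by
      rw [hn1_def]; exact Finset.sum_nonneg fun a _ => mul_self_nonneg _
    have hn2 : 0 ≤ n2 := by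
      rw [hn2_def]; exact Finset.sum_nonneg fun a _ => mul_self_nonneg _
    have hn1' : ∀ a, (y₁ a : ℝ) ^ 2 ≤ n1 := by
      intro a
      rw [hn1_def, sq]
      exact Finset.single_le_sum (f := fun b => (y₁ b : ℝ) * (y₁ b : ℝ))
        (fun b _ => mul_self_nonneg _) (Finset.mem_univ a)
    have hn2' : ∀ a, (y₂ a : ℝ) ^ 2 ≤ n2 := by
      intro a
      rw [hn2_def, sq]
      exact Finset.single_le_sum (f := fun b => (y₂ b : ℝ) * (y₂ b : ℝ))
        (fun b _ => mul_self_nonneg _) (Finset.mem_univ a)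
    have hs : s ^ 2 ≤ n1 * n2 := by
      have h := Finset.sum_mul_sq_le_sq_mul_sq Finset.univ
        (fun a => (y₁ a : ℝ)) (fun a => (y₂ a : ℝ))
      rw [hn1_def, hn2_def, hs_def]
      simpa only [sq] using h
    clear_value n1 n2 s
    clear hn1_def hn2_def hs_def
    have hd0 : 0 ≤ n1 * n2 - s ^ 2 := by linarith
    have hDlb : (n1 * n2 - s ^ 2) + c * (1 + n1 + n2) ≤ (T + gram m y₁ y₂).det := by
      rw [hDval]
      exact aux_det_lb hα hγ hcdet hclamc hn1 hn2 hs
    have hQpos : (0:ℝ) < 1 + n1 + n2 := by linarith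
    have hbound : (gram m y₁ y₂).det ^ ((w : ℝ) / 2) /
        (T + gram m y₁ y₂).det ^ ((w : ℝ) + 1 / 2) ≤
        c ^ (-e) * (1 + n1 + n2) ^ (-e) := by
      rw [hdval, hexp]
      exact aux_rpow_bound hd0 hcpos hQpos hDlb (by linarith) he
    constructor
    · rw [hdval]
      have hDpos : 0 < (T + gram m y₁ y₂).det := by
        have h0 : 0 < (n1 * n2 - s ^ 2) + c * (1 + n1 + n2) := by nlinarith
        linarith
      positivity
    · refine hbound.trans ?_
      apply mul_le_mul_of_nonneg_left ?_ (Real.rpow_nonneg hcpos.le _)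
      have hb1 : (1 + n1 + n2) ^ (-((m:ℝ) * t)) ≤
          ∏ a, ((1 : ℝ) + (y₁ a : ℝ) ^ 2) ^ (-t) :=
        aux_prod_rpow_bound ht0 (fun a => sq_nonneg _) (by linarith)
          (fun a => by have := hn1' a; linarith)
      have hb2 : (1 + n1 + n2) ^ (-((m:ℝ) * t)) ≤
          ∏ a, ((1 : ℝ) + (y₂ a : ℝ) ^ 2) ^ (-t) :=
        aux_prod_rpow_bound ht0 (fun a => sq_nonneg _) (by linarith)
          (fun a => by have := hn2' a; linarith)
      have hsplit : (1 + n1 + n2) ^ (-e) =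
          (1 + n1 + n2) ^ (-((m:ℝ) * t)) * (1 + n1 + n2) ^ (-((m:ℝ) * t)) := by
        rw [← Real.rpow_add hQpos]
        congr 1
        rw [ht2]; ring
      rw [hsplit]
      exact mul_le_mul hb1 hb2 (Real.rpow_nonneg hQpos.le _) (hFnn y₁)
  exact Summable.of_nonneg_of_le (fun p => (key p).1) (fun p => (key p).2) hmaj
end

section
/- Let k be a field of characteristic zero, V a k-vector space with symmetric bilinear form B, and W = k⁴ with symplectic form ⟨·,·⟩ and basis e₁, e₂, f₁, f₂ satisfying ⟨eᵢ,fⱼ⟩ = δᵢⱼ, ⟨eᵢ,eⱼ⟩ = ⟨fᵢ,fⱼ⟩ = 0. Suppose b₁, b₂, b₋₁, b₋₂ ∈ V satisfy B(bᵢ,bⱼ) = B(b₋ᵢ,b₋ⱼ) = 0 and B(bᵢ,b₋ⱼ) = δᵢⱼ, and x₁, x₂, y₁, y₂ ∈ V satisfy B(xᵢ, b_{±j}) = B(yᵢ, b_{±j}) = 0 for all i,j. Let w₁, w₂ lie in the span of f₁, f₂. Equip V ⊗ W with the bilinear form Ω = B ⊗ ⟨·,·⟩. Define z_X = b₁⊗w₁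 + b₂⊗w₂ + y₁⊗e₁ + y₂⊗e₂ and z_Y = −x₁⊗w₁ − x₂⊗w₂ − (1/2)(B(x₁,x₁)b₋₁ + B(x₂,x₁)b₋₂)⊗w₁ − (1/2)(B(x₁,x₂)b₋₁ + B(x₂,x₂)b₋₂)⊗w₂ + (B(x₁,y₁)b₋₁ + B(x₂,y₁)b₋₂)⊗e₁ + (B(x₁,y₂)b₋₁ + B(x₂,y₂)b₋₂)⊗e₂. Then (1/2)·Ω(z_X, z_Y) = B(x₁,y₁)⟨w₁,e₁⟩ + B(x₁,y₂)⟨w₁,e₂⟩ + B(x₂,y₁)⟨w₂,e₁⟩ + B(x₂,y₂)⟨w₂,e₂⟩. -/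
open TensorProduct LinearMap

/-- The standard symplectic form on `k⁴`, with respect to the basis
`e₁ = ![1,0,0,0]`, `e₂ = ![0,1,0,0]`, `f₁ = ![0,0,1,0]`, `f₂ = ![0,0,0,1]`,
so that `⟨eᵢ, fⱼ⟩ = δᵢⱼ` and `⟨eᵢ,eⱼ⟩ = ⟨fᵢ,fⱼ⟩ = 0`. -/
noncomputable def sympForm (k : Type*) [Field k] : LinearMap.BilinForm k (Fin 4 → k) :=
  LinearMap.mk₂ k (fun u v => u 0 * v 2 - u 2 * v 0 + u 1 * v 3 - u 3 * v 1)
    (by intros; simp; ring) (by intros; simp; ring)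
    (by intros; simp; ring) (by intros; simp; ring)

/-- Lemma 2.4 of the paper: the symplectic pairing of the two Lagrangian projections of
`z = (b₁w₁ + b₂w₂ + y₁e₁ + y₂e₂)·exp(x₁b₋₁ + x₂b₋₂)` in `V ⊗ W` computes the character
`(x₁,y₁)⟨w₁,e₁⟩ + (x₁,y₂)⟨w₁,e₂⟩ + (x₂,y₁)⟨w₂,e₁⟩ + (x₂,y₂)⟨w₂,e₂⟩`. -/
theorem half_pairing_of_projections
    (k : Type*) [Field k] [CharZero k]
    (V : Type*) [AddCommGroup V] [Module k V]
    (B : LinearMap.BilinForm k V) (hB : B.IsSymm)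
    (b₁ b₂ bm₁ bm₂ x₁ x₂ y₁ y₂ : V)
    (hbb : B b₁ b₁ = 0 ∧ B b₁ b₂ = 0 ∧ B b₂ b₁ = 0 ∧ B b₂ b₂ = 0)
    (hbmbm : B bm₁ bm₁ = 0 ∧ B bm₁ bm₂ = 0 ∧ B bm₂ bm₁ = 0 ∧ B bm₂ bm₂ = 0)
    (hbbm : B b₁ bm₁ = 1 ∧ B b₁ bm₂ = 0 ∧ B b₂ bm₁ = 0 ∧ B b₂ bm₂ = 1)
    (hx : ∀ i ∈ ({x₁, x₂, y₁, y₂} : Set V), B i b₁ = 0 ∧ B i b₂ = 0 ∧ B i bm₁ = 0 ∧ B i bm₂ = 0)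
    (e₁ e₂ f₁ f₂ : Fin 4 → k)
    (he₁ : e₁ = ![1, 0, 0, 0]) (he₂ : e₂ = ![0, 1, 0, 0])
    (hf₁ : f₁ = ![0, 0, 1, 0]) (hf₂ : f₂ = ![0, 0, 0, 1])
    (w₁ w₂ : Fin 4 → k)
    (hw₁ : w₁ ∈ Submodule.span k ({f₁, f₂} : Set (Fin 4 → k)))
    (hw₂ : w₂ ∈ Submodule.span k ({f₁, f₂} : Set (Fin 4 → k)))
    (zX zY : V ⊗[k] (Fin 4 → k))
    (hzX : zX = b₁ ⊗ₜ w₁ + b₂ ⊗ₜ w₂ + y₁ ⊗ₜ e₁ + y₂ ⊗ₜ e₂)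
    (hzY : zY = -(x₁ ⊗ₜ w₁) - x₂ ⊗ₜ w₂
        - ((1 / 2 : k) • (B x₁ x₁ • bm₁ + B x₂ x₁ • bm₂)) ⊗ₜ w₁
        - ((1 / 2 : k) • (B x₁ x₂ • bm₁ + B x₂ x₂ • bm₂)) ⊗ₜ w₂
        + (B x₁ y₁ • bm₁ + B x₂ y₁ • bm₂) ⊗ₜ e₁
        + (B x₁ y₂ • bm₁ + B x₂ y₂ • bm₂) ⊗ₜ e₂) :
    (1 / 2 : k) * (LinearMap.BilinForm.tmul B (sympForm k)) zX zY =
      B x₁ y₁ * sympForm k w₁ e₁ + B x₁ y₂ * sympForm k w₁ e₂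
        + B x₂ y₁ * sympForm k w₂ e₁ + B x₂ y₂ * sympForm k w₂ e₂ := by
  obtain ⟨a₁, a₂, hwa⟩ := Submodule.mem_span_pair.1 hw₁
  obtain ⟨c₁, c₂, hwc⟩ := Submodule.mem_span_pair.1 hw₂
  obtain ⟨hx₁1, hx₁2, hx₁3, hx₁4⟩ := hx x₁ (by simp)
  obtain ⟨hx₂1, hx₂2, hx₂3, hx₂4⟩ := hx x₂ (by simp)
  obtain ⟨hy₁1, hy₁2, hy₁3, hy₁4⟩ := hx y₁ (by simp)
  obtain ⟨hy₂1, hy₂2, hy₂3, hy₂4⟩ := hx y₂ (by simp)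
  obtain ⟨hm1, hm2, hm3, hm4⟩ := hbbm
  obtain ⟨hmm1, hmm2, hmm3, hmm4⟩ := hbmbm
  have sy : ∀ u v : V, B u v = B v u := fun u v => (LinearMap.BilinForm.isSymm_def.1 hB v u).symm
  have hr1 : B bm₁ b₁ = 1 := by rw [sy]; exact hm1
  have hr2 : B bm₂ b₁ = 0 := by rw [sy]; exact hm2
  have hr3 : B bm₁ b₂ = 0 := by rw [sy]; exact hm3
  have hr4 : B bm₂ b₂ = 1 := by rw [sy]; exact hm4
  subst hzX hzY hwa hwc he₁ he₂ hf₁ hf₂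
  simp only [LinearMap.BilinForm.tmul, map_add, map_sub, map_neg, LinearMap.add_apply,
    LinearMap.sub_apply, LinearMap.neg_apply, BilinForm.tensorDistrib_tmul, smul_eq_mul,
    map_smul, LinearMap.smul_apply]
  rw [sy b₁ x₁, sy b₁ x₂, sy b₂ x₁, sy b₂ x₂, sy b₁ bm₁, sy b₁ bm₂, sy b₂ bm₁, sy b₂ bm₂,
    sy y₁ x₁, sy y₁ x₂, sy y₂ x₁, sy y₂ x₂]
  simp only [hx₁1, hx₁2, hx₁3, hx₁4, hx₂1, hx₂2, hx₂3, hx₂4, hy₁1, hy₁2, hy₁3, hy₁4,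
    hy₂1, hy₂2, hy₂3, hy₂4, hm1, hm2, hm3, hm4, hmm1, hmm2, hmm3, hmm4, hr1, hr2, hr3, hr4]
  simp only [sympForm, LinearMap.mk₂_apply, Matrix.cons_val_zero, Matrix.cons_val_one,
    Matrix.head_cons, Pi.add_apply, Pi.smul_apply, smul_eq_mul, Matrix.cons_val_fin_one]
  simp [Fin.isValue, Matrix.cons_val_two, Matrix.cons_val_three]
  ring
end
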